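/- The function (v, a, τ) ↦ c₁‖v‖³ + (c₂/τ)(1 + ‖a‖²/g²) is jointly convex on ℝ² × ℝ² × (0, ∞), given constants c₁, c₂, g > 0. -/

import Mathlib

open Set

/-- quadratic-over-linear is jointly convex -/
lemma qol_convex : ConvexOn ℝ
    ((Set.univ : Set (EuclideanSpace ℝ (Fin 2))) ×ˢ Set.Ioi (0 : ℝ))
    (fun q : EuclideanSpace ℝ (Fin 2) × ℝ => ‖q.1‖ ^ 2 / q.2) := by
  constructor
  · exact convex_univ.prod (convex_Ioi 0)
  · rintro ⟨u, s⟩ ⟨-, hs⟩ ⟨w, t⟩ ⟨-, ht⟩ a b ha hb hab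
    simp only [Prod.smul_mk, Prod.mk_add_mk, smul_eq_mul] at *
    have hs : (0:ℝ) < s := hs
    have ht : (0:ℝ) < t := ht
    have hd : 0 < a * s + b * t := by
      rcases ha.eq_or_lt with h | h
      · subst h; simp at hab; nlinarith
      · nlinarith [mul_nonneg hb ht.le]
    have h1 : ‖a • u + b • w‖ ≤ a * ‖u‖ + b * ‖w‖ := by
      calc ‖a • u + b • w‖ ≤ ‖a • u‖ + ‖b • w‖ := norm_add_le _ _
        _ = a * ‖u‖ + b * ‖w‖ := by
          rw [norm_smul, norm_smul, Real.norm_of_nonneg ha, Real.norm_of_nonneg hb]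
    have h2 : ‖a • u + b • w‖ ^ 2 ≤ (a * ‖u‖ + b * ‖w‖) ^ 2 := by
      exact pow_le_pow_left₀ (norm_nonneg _) h1 2
    have h3 : (a * ‖u‖ + b * ‖w‖) ^ 2 / (a * s + b * t)
        ≤ a * (‖u‖ ^ 2 / s) + b * (‖w‖ ^ 2 / t) := by
      have heq : a * (‖u‖ ^ 2 / s) + b * (‖w‖ ^ 2 / t)
          = (a * ‖u‖ ^ 2 * t + b * ‖w‖ ^ 2 * s) / (s * t) := by
        field_simp
      rw [div_le_iff₀ hd, heq, div_mul_eq_mul_div, le_div_iff₀ (mul_pos hs ht)]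
      nlinarith [mul_nonneg (mul_nonneg ha hb) (sq_nonneg (‖u‖ * t - ‖w‖ * s)),
        mul_pos hs ht]
    calc ‖a • u + b • w‖ ^ 2 / (a * s + b * t)
        ≤ (a * ‖u‖ + b * ‖w‖) ^ 2 / (a * s + b * t) := by
          gcongr
      _ ≤ _ := h3

lemma cube_convex : ConvexOn ℝ (Set.univ : Set (EuclideanSpace ℝ (Fin 2)))
    (fun v => ‖v‖ ^ 3) := by
  constructor
  · exact convex_univ
  · intro u _ w _ a b ha hb hab
    have h1 : ‖a • u + b • w‖ ≤ a * ‖u‖ + b * ‖w‖ := by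
      calc ‖a • u + b • w‖ ≤ ‖a • u‖ + ‖b • w‖ := norm_add_le _ _
        _ = a * ‖u‖ + b * ‖w‖ := by
          rw [norm_smul, norm_smul, Real.norm_of_nonneg ha, Real.norm_of_nonneg hb]
    calc ‖a • u + b • w‖ ^ 3 ≤ (a * ‖u‖ + b * ‖w‖) ^ 3 :=
          pow_le_pow_left₀ (norm_nonneg _) h1 3
      _ = (a • ‖u‖ + b • ‖w‖) ^ 3 := by norm_num
      _ ≤ a • ‖u‖ ^ 3 + b • ‖w‖ ^ 3 :=
          (convexOn_pow 3).2 (norm_nonneg u) (norm_nonneg w) ha hb hab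
      _ = a * ‖u‖ ^ 3 + b * ‖w‖ ^ 3 := by norm_num

/-- (v, a, τ) ↦ c₁‖v‖³ + (c₂/τ)(1 + ‖a‖²/g²) is jointly convex on ℝ² × ℝ² × (0,∞). -/
theorem stmt12 (c₁ c₂ g : ℝ) (hc₁ : 0 < c₁) (hc₂ : 0 < c₂) (hg : 0 < g) :
    ConvexOn ℝ
      ((Set.univ : Set (EuclideanSpace ℝ (Fin 2))) ×ˢ
        (Set.univ : Set (EuclideanSpace ℝ (Fin 2))) ×ˢ Set.Ioi (0 : ℝ))
      (fun p : EuclideanSpace ℝ (Fin 2) × EuclideanSpace ℝ (Fin 2) × ℝ =>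
        c₁ * ‖p.1‖ ^ 3 + (c₂ / p.2.2) * (1 + ‖p.2.1‖ ^ 2 / g ^ 2)) := by
  set E := EuclideanSpace ℝ (Fin 2)
  set S := ((Set.univ : Set E) ×ˢ (Set.univ : Set E) ×ˢ Set.Ioi (0 : ℝ))
  have hSconv : Convex ℝ S := convex_univ.prod (convex_univ.prod (convex_Ioi 0))
  -- piece 1
  have h1 : ConvexOn ℝ S (fun p : E × E × ℝ => c₁ * ‖p.1‖ ^ 3) := by
    have := ((cube_convex.smul hc₁.le).comp_affineMap
      (LinearMap.fst ℝ E (E × ℝ)).toAffineMap)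
    exact (this.subset (fun p _ => Set.mem_univ _) hSconv)
  -- piece 2
  have h2 : ConvexOn ℝ S (fun p : E × E × ℝ => c₂ * p.2.2⁻¹) := by
    have hz : ConvexOn ℝ (Set.Ioi (0:ℝ)) (fun x : ℝ => x⁻¹) := by
      have := convexOn_zpow (-1 : ℤ) (𝕜 := ℝ)
      simpa using this
    have := ((hz.smul hc₂.le).comp_affineMap
      ((LinearMap.snd ℝ E ℝ).comp (LinearMap.snd ℝ E (E × ℝ))).toAffineMap)
    refine this.subset ?_ hSconv
    rintro ⟨v, a, t⟩ ⟨-, -, ht⟩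
    exact ht
  -- piece 3
  have h3 : ConvexOn ℝ S (fun p : E × E × ℝ => (c₂ / g ^ 2) * (‖p.2.1‖ ^ 2 / p.2.2)) := by
    have hcg : 0 ≤ c₂ / g ^ 2 := by positivity
    have := ((qol_convex.smul hcg).comp_affineMap
      (LinearMap.snd ℝ E (E × ℝ)).toAffineMap)
    refine this.subset ?_ hSconv
    rintro ⟨v, a, t⟩ ⟨-, -, ht⟩
    exact ⟨Set.mem_univ _, ht⟩
  have hsum := (h1.add h2).add h3
  refine hsum.congr ?_
  rintro ⟨v, a, t⟩ ⟨-, -, ht⟩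
  have ht' : (t : ℝ) ≠ 0 := ne_of_gt ht
  simp only [Function.comp, smul_eq_mul, Pi.add_apply]
  field_simp
  ring
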